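/- Let t : Fin n → A × B with n ≥ 1 model a bag relation, let dom_X be the image of i ↦ (t i).1 and dom_XY the image of t. Then |dom_X| ≤ |dom_XY|, and |dom_X| = |dom_XY| if and only if t satisfies the FD X→Y. (The co-occurrence ratio ρ := |dom_X|/|dom_XY| is at most 1, with value 1 exactly when the FD holds.) -/

import Mathlib

namespace AFD

open Finset

variable {A B : Type*}

/-- Number of indices with X-value `a`. -/
def c1 {n : ℕ} [DecidableEq A] (t : Fin n → A × B) (a : A) : ℕ :=
  (Finset.univ.filter fun i => (t i).1 = a).card

/-- Number of indices with Y-value `b`. -/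
def c2 {n : ℕ} [DecidableEq B] (t : Fin n → A × B) (b : B) : ℕ :=
  (Finset.univ.filter fun i => (t i).2 = b).card

/-- Number of indices with tuple value `(a, b)`. -/
def cnt {n : ℕ} [DecidableEq A] [DecidableEq B] (t : Fin n → A × B) (a : A) (b : B) : ℕ :=
  (Finset.univ.filter fun i => t i = (a, b)).card

/-- Marginal probability of X-value `a`. -/
noncomputable def p1 {n : ℕ} [DecidableEq A] (t : Fin n → A × B) (a : A) : ℝ :=
  (c1 t a : ℝ) / n

/-- Marginal probability of Y-value `b`. -/
noncomputable def p2 {n : ℕ} [DecidableEq B] (t : Fin n → A × B) (b : B) : ℝ :=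
  (c2 t b : ℝ) / n

/-- Joint probability of `(a, b)`. -/
noncomputable def pJ {n : ℕ} [DecidableEq A] [DecidableEq B] (t : Fin n → A × B)
    (a : A) (b : B) : ℝ :=
  (cnt t a b : ℝ) / n

/-- Conditional probability of Y-value `b` given X-value `a` (with the `0/0 = 0` convention,
which is automatic for real division in Lean). -/
noncomputable def pC {n : ℕ} [DecidableEq A] [DecidableEq B] (t : Fin n → A × B)
    (a : A) (b : B) : ℝ :=
  pJ t a b / p1 t a

/-- The set of distinct X-values. -/
def domX {n : ℕ} [DecidableEq A] (t : Fin n → A × B) : Finset A :=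
  Finset.univ.image fun i => (t i).1

/-- The set of distinct Y-values. -/
def domY {n : ℕ} [DecidableEq B] (t : Fin n → A × B) : Finset B :=
  Finset.univ.image fun i => (t i).2

/-- The set of distinct tuples. -/
def domXY {n : ℕ} [DecidableEq A] [DecidableEq B] (t : Fin n → A × B) : Finset (A × B) :=
  Finset.univ.image t

/-- The probabilistic dependency `pdep(X → Y)`. -/
noncomputable def pdep {n : ℕ} [DecidableEq A] [DecidableEq B] (t : Fin n → A × B) : ℝ :=
  ∑ a ∈ domX t, p1 t a * ∑ b ∈ domY t, (pC t a b) ^ 2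

/-- The probabilistic self-dependency `pdep(Y)`. -/
noncomputable def pdepY {n : ℕ} [DecidableEq B] (t : Fin n → A × B) : ℝ :=
  ∑ b ∈ domY t, (p2 t b) ^ 2

/-- The (X;Y)-permutation of `t` induced by the permutation `σ`. -/
def permRel {n : ℕ} (t : Fin n → A × B) (σ : Equiv.Perm (Fin n)) : Fin n → A × B :=
  fun i => ((t i).1, (t (σ i)).2)

/-- `t` satisfies the functional dependency X → Y. -/
def satFD {n : ℕ} (t : Fin n → A × B) : Prop :=
  ∀ i j, (t i).1 = (t j).1 → (t i).2 = (t j).2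

/-- The co-occurrence ratio ρ := |dom_X|/|dom_XY| is at most 1, with value 1 exactly
when the FD X→Y holds: `|dom_X| ≤ |dom_XY|`, with equality iff the FD holds. -/
theorem domX_card_le_domXY_card_iff {A B : Type*} [DecidableEq A] [DecidableEq B]
    {n : ℕ} (hn : 1 ≤ n) (t : Fin n → A × B) :
    (domX t).card ≤ (domXY t).card ∧
    ((domX t).card = (domXY t).card ↔ satFD t) := by
  have himg : domX t = (domXY t).image Prod.fst := by
    simp [domX, domXY, Finset.image_image]; rfl
  constructor
  · rw [himg]; exact Finset.card_image_le
  · constructor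
    · intro h i j hfst
      rw [himg] at h
      have hinj : Set.InjOn (Prod.fst : A × B → A) (domXY t) := Finset.card_image_iff.mp h
      have hi : t i ∈ domXY t := Finset.mem_image_of_mem t (Finset.mem_univ i)
      have hj : t j ∈ domXY t := Finset.mem_image_of_mem t (Finset.mem_univ j)
      have := hinj hi hj hfst
      exact congrArg Prod.snd this
    · intro h
      rw [himg]
      apply Finset.card_image_of_injOn
      intro x hx y hy hxy
      simp only [domXY, Finset.mem_coe, Finset.mem_image, Finset.mem_univ, true_and] at hx hy
      obtain ⟨i, rfl⟩ := hx
      obtain ⟨j, rfl⟩ := hy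
      exact Prod.ext hxy (h i j hxy)

end AFD
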